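/- Under the dyadic fixed-effects setup, for all α, α′ ∈ D one has ‖r(α) − r(α′)‖₁ ≤ ‖α − α′‖₁, i.e., the degree-matching iteration map r is nonexpansive in the ℓ₁ norm on D. -/

import Mathlib

open Finset

/-- The degree-matching iteration map `r` is nonexpansive in the
ℓ₁ norm on `D`. -/
theorem iteration_map_l1_nonexpansive
    (n K : ℕ) (hn : 2 ≤ n) (hK : 1 ≤ K)
    (c₁ c₂ : ℝ) (hc₁ : c₁ ∈ Set.Ioc (0 : ℝ) (1 / 2)) (hc₂ : c₂ ∈ Set.Ioc (0 : ℝ) (1 / 2))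
    (F f : ℝ → ℝ) (hFf : ∀ t : ℝ, HasDerivAt F (f t) t)
    (β : Fin K → ℝ) (x : Fin n → Fin n → Fin K → ℝ) (d : Fin n → ℝ)
    (D : Set (Fin n → ℝ)) (hDne : D.Nonempty) (hDconv : Convex ℝ D)
    (hFbound : ∀ α ∈ D, ∀ i j : Fin n, i ≠ j →
      F (α i + ∑ k, x i j k * β k) ∈ Set.Icc c₁ (1 - c₁))
    (hfbound : ∀ α ∈ D, ∀ i j : Fin n, i ≠ j →
      f (α i + ∑ k, x i j k * β k) ∈ Set.Icc c₂ (1 - c₂))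
    (r : (Fin n → ℝ) → Fin n → ℝ)
    (hr : ∀ α : Fin n → ℝ, ∀ i : Fin n,
      r α i = α i + (1 / ((n : ℝ) - 1)) *
        (d i - ∑ j ∈ univ.erase i,
          F (α i + ∑ k, x i j k * β k) * F (α j + ∑ k, x j i k * β k)))
    (α α' : Fin n → ℝ) (hα : α ∈ D) (hα' : α' ∈ D) :
    ∑ i, |r α i - r α' i| ≤ ∑ i, |α i - α' i| := by
  classical
  have hn1 : (1:ℝ) ≤ (n:ℝ) - 1 := by
    have : (2:ℝ) ≤ (n:ℝ) := by exact_mod_cast hn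
    linarith
  have hn0 : (0:ℝ) < (n:ℝ) - 1 := by linarith
  set Δ : Fin n → ℝ := fun i => α i - α' i with hΔdef
  set X : Fin n → Fin n → ℝ := fun i j => ∑ k, x i j k * β k with hXdef
  set θ : ℝ → Fin n → ℝ := fun t i => α' i + t * Δ i with hθdef
  have hθD : ∀ t ∈ Set.Icc (0:ℝ) 1, θ t ∈ D := by
    intro t ht
    have h := hDconv hα' hα (by linarith [ht.2] : (0:ℝ) ≤ 1 - t) ht.1 (by ring)
    convert h using 1
    funext i
    simp only [hθdef, hΔdef, Pi.add_apply, Pi.smul_apply, smul_eq_mul]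
    ring
  -- mean value step
  have main : ∀ i j : Fin n, i ≠ j → ∃ a b : ℝ, 0 ≤ a ∧ a ≤ 1 ∧ 0 ≤ b ∧ b ≤ 1 ∧
      F (α i + X i j) * F (α j + X j i) - F (α' i + X i j) * F (α' j + X j i)
        = a * Δ i + b * Δ j := by
    intro i j hij
    set g : ℝ → ℝ := fun t => F (θ t i + X i j) * F (θ t j + X j i) with hg
    set g' : ℝ → ℝ := fun t =>
      f (θ t i + X i j) * Δ i * F (θ t j + X j i)
        + F (θ t i + X i j) * (f (θ t j + X j i) * Δ j) with hg'
    have hderiv : ∀ t : ℝ, HasDerivAt g (g' t) t := by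
      intro t
      have h1 : HasDerivAt (fun t : ℝ => θ t i + X i j) (Δ i) t := by
        have h : HasDerivAt (fun t : ℝ => α' i + t * Δ i + X i j) (Δ i) t := by
          simpa using (((hasDerivAt_id t).mul_const (Δ i)).const_add (α' i)).add_const (X i j)
        simpa [hθdef] using h
      have h2 : HasDerivAt (fun t : ℝ => θ t j + X j i) (Δ j) t := by
        have h : HasDerivAt (fun t : ℝ => α' j + t * Δ j + X j i) (Δ j) t := by
          simpa using (((hasDerivAt_id t).mul_const (Δ j)).const_add (α' j)).add_const (X j i)
        simpa [hθdef] using h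
      have hF1 := (hFf (θ t i + X i j)).comp t h1
      have hF2 := (hFf (θ t j + X j i)).comp t h2
      simpa [hg, hg', mul_comm, mul_assoc, mul_left_comm, Function.comp_def, Pi.mul_def] using hF1.mul hF2
    have hcont : ContinuousOn g (Set.Icc 0 1) :=
      fun t _ => (hderiv t).continuousAt.continuousWithinAt
    obtain ⟨c, hc, hceq⟩ := exists_hasDerivAt_eq_slope g g' (by norm_num : (0:ℝ) < 1)
      hcont (fun t _ => hderiv t)
    have hcD : θ c ∈ D := hθD c ⟨le_of_lt hc.1, le_of_lt hc.2⟩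
    have hF1b := hFbound (θ c) hcD i j hij
    have hF2b := hFbound (θ c) hcD j i hij.symm
    have hf1b := hfbound (θ c) hcD i j hij
    have hf2b := hfbound (θ c) hcD j i hij.symm
    refine ⟨f (θ c i + X i j) * F (θ c j + X j i), F (θ c i + X i j) * f (θ c j + X j i),
      ?_, ?_, ?_, ?_, ?_⟩
    · exact mul_nonneg (le_trans (le_of_lt hc₂.1) hf1b.1) (le_trans (le_of_lt hc₁.1) hF2b.1)
    · exact mul_le_one₀ (by linarith [hf1b.2, hc₂.1]) (le_trans (le_of_lt hc₁.1) hF2b.1)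
        (by linarith [hF2b.2, hc₁.1])
    · exact mul_nonneg (le_trans (le_of_lt hc₁.1) hF1b.1) (le_trans (le_of_lt hc₂.1) hf2b.1)
    · exact mul_le_one₀ (by linarith [hF1b.2, hc₁.1]) (le_trans (le_of_lt hc₂.1) hf2b.1)
        (by linarith [hf2b.2, hc₂.1])
    · have h10 : g 1 - g 0 = g' c := by rw [hceq]; ring
      have hθ1 : ∀ m : Fin n, θ 1 m = α m := by
        intro m; simp [hθdef, hΔdef]
      have hθ0 : ∀ m : Fin n, θ 0 m = α' m := by
        intro m; simp [hθdef]
      rw [hg, hg'] at h10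
      simp only [hθ1, hθ0] at h10
      rw [h10]; ring
  -- choose symmetric coefficients
  have hAex : ∃ A : Fin n → Fin n → ℝ, ∀ i j : Fin n, i ≠ j →
      0 ≤ A i j ∧ A i j ≤ 1 ∧
      F (α i + X i j) * F (α j + X j i) - F (α' i + X i j) * F (α' j + X j i)
        = A i j * Δ i + A j i * Δ j := by
    refine ⟨fun i j =>
      if h : i < j then (main i j h.ne).choose
      else if h' : j < i then (main j i h'.ne).choose_spec.choose
      else 0, ?_⟩
    intro i j hij
    rcases lt_or_gt_of_ne hij with h | h
    · have hspec := (main i j h.ne).choose_spec.choose_spec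
      simp only [dif_pos h, dif_neg (not_lt_of_gt h), dif_neg (lt_asymm h)]
      exact ⟨hspec.1, hspec.2.1, hspec.2.2.2.2⟩
    · have hspec := (main j i h.ne).choose_spec.choose_spec
      simp only [dif_neg (not_lt_of_gt h), dif_pos h, dif_neg (lt_asymm h)]
      refine ⟨hspec.2.2.1, hspec.2.2.2.1, ?_⟩
      have heq := hspec.2.2.2.2
      nlinarith [heq, mul_comm (F (α j + X j i)) (F (α i + X i j)),
        mul_comm (F (α' j + X j i)) (F (α' i + X i j))]
  obtain ⟨A, hA⟩ := hAex
  -- rewrite r α i - r α' i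
  have hr' : ∀ i : Fin n, r α i - r α' i =
      (1 - ((n:ℝ) - 1)⁻¹ * ∑ j ∈ univ.erase i, A i j) * Δ i
        - ((n:ℝ) - 1)⁻¹ * ∑ j ∈ univ.erase i, A j i * Δ j := by
    intro i
    have hsum : ∑ j ∈ univ.erase i, F (α i + X i j) * F (α j + X j i)
        - ∑ j ∈ univ.erase i, F (α' i + X i j) * F (α' j + X j i)
        = (∑ j ∈ univ.erase i, A i j) * Δ i + ∑ j ∈ univ.erase i, A j i * Δ j := by
      rw [← Finset.sum_sub_distrib, Finset.sum_mul, ← Finset.sum_add_distrib]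
      refine Finset.sum_congr rfl (fun j hj => ?_)
      exact (hA i j (Finset.ne_of_mem_erase hj).symm).2.2
    simp only [hXdef] at hsum
    rw [hr α i, hr α' i, one_div]
    simp only [hΔdef] at hsum ⊢
    have hinv : ((n:ℝ) - 1)⁻¹ * ((n:ℝ) - 1) = 1 := inv_mul_cancel₀ (ne_of_gt hn0)
    linear_combination (-(((n:ℝ) - 1)⁻¹)) * hsum
  -- bounds on coefficients sums
  have hS : ∀ i : Fin n, ∑ j ∈ univ.erase i, A i j ≤ (n:ℝ) - 1 := by
    intro i
    have hle : ∑ j ∈ univ.erase i, A i j ≤ (univ.erase i).card • (1:ℝ) :=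
      Finset.sum_le_card_nsmul _ _ _
        (fun j hj => (hA i j (Finset.ne_of_mem_erase hj).symm).2.1)
    have hcard : (univ.erase i).card = n - 1 := by
      simp [Finset.card_erase_of_mem]
    rw [hcard, nsmul_eq_mul] at hle
    have : ((n - 1 : ℕ) : ℝ) = (n:ℝ) - 1 := by
      have : 1 ≤ n := by omega
      push_cast [Nat.cast_sub this]
      ring
    rw [this] at hle
    linarith
  have hinvnn : (0:ℝ) ≤ ((n:ℝ) - 1)⁻¹ := le_of_lt (inv_pos.mpr hn0)
  -- per-coordinate bound
  have hs : ∀ i : Fin n, |r α i - r α' i| ≤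
      (1 - ((n:ℝ) - 1)⁻¹ * ∑ j ∈ univ.erase i, A i j) * |Δ i|
        + ((n:ℝ) - 1)⁻¹ * ∑ j ∈ univ.erase i, A j i * |Δ j| := by
    intro i
    rw [hr' i]
    have h1 : 0 ≤ 1 - ((n:ℝ) - 1)⁻¹ * ∑ j ∈ univ.erase i, A i j := by
      have hle : ((n:ℝ) - 1)⁻¹ * (∑ j ∈ univ.erase i, A i j) ≤ ((n:ℝ) - 1)⁻¹ * ((n:ℝ) - 1) :=
        mul_le_mul_of_nonneg_left (hS i) hinvnn
      rw [inv_mul_cancel₀ (ne_of_gt hn0)] at hle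
      linarith
    refine le_trans (abs_sub _ _) ?_
    have ha : |(1 - ((n:ℝ) - 1)⁻¹ * ∑ j ∈ univ.erase i, A i j) * Δ i|
        = (1 - ((n:ℝ) - 1)⁻¹ * ∑ j ∈ univ.erase i, A i j) * |Δ i| := by
      rw [abs_mul, abs_of_nonneg h1]
    have hb : |((n:ℝ) - 1)⁻¹ * ∑ j ∈ univ.erase i, A j i * Δ j|
        ≤ ((n:ℝ) - 1)⁻¹ * ∑ j ∈ univ.erase i, A j i * |Δ j| := by
      rw [abs_mul, abs_of_nonneg hinvnn]
      refine mul_le_mul_of_nonneg_left ?_ hinvnn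
      refine le_trans (Finset.abs_sum_le_sum_abs _ _) (Finset.sum_le_sum fun j hj => ?_)
      rw [abs_mul, abs_of_nonneg (hA j i (Finset.ne_of_mem_erase hj)).1]
    linarith [ha, hb]
  -- swap the double sum
  have hswap : (∑ i, ∑ j ∈ univ.erase i, A j i * |Δ j|)
      = ∑ j, (∑ i ∈ univ.erase j, A j i) * |Δ j| := by
    rw [Finset.sum_comm' (t' := univ) (s' := fun j => univ.erase j) ?_]
    · exact Finset.sum_congr rfl fun j _ => by rw [Finset.sum_mul]
    · intro i j
      simp [Finset.mem_erase, ne_comm, and_comm]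
  calc ∑ i, |r α i - r α' i|
      ≤ ∑ i, ((1 - ((n:ℝ) - 1)⁻¹ * ∑ j ∈ univ.erase i, A i j) * |Δ i|
          + ((n:ℝ) - 1)⁻¹ * ∑ j ∈ univ.erase i, A j i * |Δ j|) :=
        Finset.sum_le_sum fun i _ => hs i
    _ = ∑ i, (1 - ((n:ℝ) - 1)⁻¹ * ∑ j ∈ univ.erase i, A i j) * |Δ i|
          + ((n:ℝ) - 1)⁻¹ * ∑ i, ∑ j ∈ univ.erase i, A j i * |Δ j| := by
        rw [Finset.sum_add_distrib, Finset.mul_sum]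
    _ = ∑ i, (1 - ((n:ℝ) - 1)⁻¹ * ∑ j ∈ univ.erase i, A i j) * |Δ i|
          + ((n:ℝ) - 1)⁻¹ * ∑ i, (∑ j ∈ univ.erase i, A i j) * |Δ i| := by rw [hswap]
    _ = ∑ i, |Δ i| := by
        rw [Finset.mul_sum, ← Finset.sum_add_distrib]
        exact Finset.sum_congr rfl fun i _ => by ring
    _ = ∑ i, |α i - α' i| := by simp only [hΔdef]
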